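/- Let f be a pseudo-polynomial with leading exponent θ_d, N a sufficiently large positive integer, P the largest real solution of f(P) = N, 0 < v < min(θ_d − θ_{d−1}, 1/5) (θ_0 = 1 if d = 1), τ = P^{θ_d − v}, and let s be an integer with s > θ_d. Then ∫_{−τ^{−1}}^{τ^{−1}} V(α)^s e(−αN) dα = ∫_{−1/2}^{1/2} V(α)^s e(−αN) dα + O(P^{s − θ_d − δ₂}), where δ₂ = v(s/θ_d − 1) > 0. -/

import Mathlib

open Finset

noncomputable def e (x : ℝ) : ℂ := Complex.exp (2 * Real.pi * Complex.I * x)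

/-- A pseudo-polynomial `f(x) = a_d x^{θ_d} + ⋯ + a_1 x^{θ_1}` with real coefficients,
`a_d > 0`, real exponents `1 ≤ θ_1 < ⋯ < θ_d`, and at least one non-integral exponent. -/
structure PseudoPoly where
  d : ℕ
  d_pos : 1 ≤ d
  a : ℕ → ℝ
  θ : ℕ → ℝ
  a_pos : 0 < a d
  θ_one : 1 ≤ θ 1
  θ_mono : ∀ i, 1 ≤ i → i < d → θ i < θ (i + 1)
  nonint : ∃ i, 1 ≤ i ∧ i ≤ d ∧ ∀ n : ℤ, θ i ≠ (n : ℝ)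

noncomputable def PseudoPoly.eval (f : PseudoPoly) (x : ℝ) : ℝ :=
  ∑ i ∈ Finset.Icc 1 f.d, f.a i * x ^ f.θ i

/-- `θ_{d-1}`, with the convention `θ_0 = 1` if `d = 1`. -/
noncomputable def PseudoPoly.θprev (f : PseudoPoly) : ℝ :=
  if f.d = 1 then 1 else f.θ (f.d - 1)

/-- `P` is the largest real solution of `f(P) = N`. -/
def PseudoPoly.IsLargestRoot (f : PseudoPoly) (N : ℝ) (P : ℝ) : Prop :=
  f.eval P = N ∧ ∀ x : ℝ, f.eval x = N → x ≤ P

/-- `V(α) = (1/a_d)^{1/θ_d} (1/θ_d) Σ_{m=1}^{N} m^{1/θ_d − 1} e(αm)`. -/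
noncomputable def V (f : PseudoPoly) (N : ℕ) (α : ℝ) : ℂ :=
  (((1 / f.a f.d) ^ (1 / f.θ f.d) * (1 / f.θ f.d) : ℝ) : ℂ) *
    ∑ m ∈ Finset.Icc 1 N, (((m : ℝ) ^ (1 / f.θ f.d - 1) : ℝ) : ℂ) * e (α * m)

lemma abs_e (x : ℝ) : ‖(e x)‖ = 1 := by
  rw [e, show (2 * Real.pi * Complex.I * (x:ℂ)) = ((2*Real.pi*x : ℝ):ℂ) * Complex.I by
    push_cast; ring, Complex.norm_exp]
  simp

lemma e_mul_nat (α : ℝ) (m : ℕ) : e (α * m) = e α ^ m := by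
  rw [e, e, ← Complex.exp_nat_mul]
  congr 1
  push_cast; ring

lemma e_ne_one {α : ℝ} (h0 : 0 < |α|) (h2 : |α| ≤ 1/2) : e α ≠ 1 := by
  intro h
  rw [e, Complex.exp_eq_one_iff] at h
  obtain ⟨n, hn⟩ := h
  have : (α : ℂ) = (n : ℂ) := by
    have hI : (2 * (Real.pi:ℂ) * Complex.I : ℂ) ≠ 0 := by
      simp [Complex.I_ne_zero, Real.pi_ne_zero]
    apply mul_left_cancel₀ hI
    rw [show (2 * (Real.pi:ℂ) * Complex.I) * (α:ℂ) = 2 * ↑Real.pi * Complex.I * ↑α by ring, hn]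
    ring
  have hα : α = (n : ℝ) := by exact_mod_cast this
  rcases eq_or_ne n 0 with rfl | hn0
  · simp [hα] at h0
  · have : (1:ℝ) ≤ |α| := by
      rw [hα, ← Int.cast_abs]
      exact_mod_cast Int.one_le_abs hn0
    linarith

lemma e_re_im (α : ℝ) : (e α).re = Real.cos (2*Real.pi*α) ∧ (e α).im = Real.sin (2*Real.pi*α) := by
  rw [e]
  rw [show (2 * Real.pi * Complex.I * (α:ℂ)) = ((2*Real.pi*α : ℝ):ℂ) * Complex.I by
    push_cast; ring]
  constructor
  · rw [Complex.exp_re]; simp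
  · rw [Complex.exp_im]; simp

lemma abs_e_sub_one (α : ℝ) : ‖(e α - 1)‖ = 2 * |Real.sin (Real.pi * α)| := by
  have h1 : (‖(e α - 1)‖)^2 = (2 * |Real.sin (Real.pi * α)|)^2 := by
    rw [Complex.sq_norm, Complex.normSq_apply]
    obtain ⟨hre, him⟩ := e_re_im α
    simp only [Complex.sub_re, Complex.sub_im, Complex.one_re, Complex.one_im, hre, him]
    have hc : Real.cos (2*Real.pi*α) = 1 - 2 * Real.sin (Real.pi * α)^2 := by
      rw [show 2*Real.pi*α = 2*(Real.pi*α) by ring, Real.cos_two_mul]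
      have := Real.sin_sq_add_cos_sq (Real.pi*α)
      nlinarith
    have hs := Real.sin_sq_add_cos_sq (2*Real.pi*α)
    have habs : |Real.sin (Real.pi*α)|^2 = Real.sin (Real.pi*α)^2 := sq_abs _
    nlinarith
  have h2 : (0:ℝ) ≤ ‖(e α - 1)‖ := norm_nonneg _
  have h3 : (0:ℝ) ≤ 2 * |Real.sin (Real.pi * α)| := by positivity
  nlinarith [sq_nonneg (‖(e α - 1)‖ - 2 * |Real.sin (Real.pi * α)|)]

lemma abs_e_sub_one_ge {α : ℝ} (h0 : 0 < |α|) (h2 : |α| ≤ 1/2) :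
    4 * |α| ≤ ‖(e α - 1)‖ := by
  rw [abs_e_sub_one]
  have : 2 * |α| ≤ |Real.sin (Real.pi * α)| := by
    rcases abs_cases α with ⟨ha, _⟩ | ⟨ha, _⟩
    · rw [ha] at h2 ⊢
      have := Real.mul_le_sin (x := Real.pi * α) (by positivity ) ?pf
      case pf => nlinarith [Real.pi_pos]
      calc 2 * α = 2/Real.pi * (Real.pi * α) := by field_simp
        _ ≤ Real.sin (Real.pi * α) := this
        _ ≤ |Real.sin (Real.pi * α)| := le_abs_self _
    · rw [ha] at h2 ⊢
      have := Real.mul_le_sin (x := Real.pi * (-α)) (by nlinarith [Real.pi_pos]) (by nlinarith [Real.pi_pos])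
      have hsin : Real.sin (Real.pi * (-α)) ≤ |Real.sin (Real.pi * α)| := by
        rw [show Real.pi * (-α) = -(Real.pi * α) by ring, Real.sin_neg]
        exact (neg_le_abs _)
      calc 2 * (-α) = 2/Real.pi * (Real.pi * (-α)) := by field_simp
        _ ≤ Real.sin (Real.pi * (-α)) := this
        _ ≤ |Real.sin (Real.pi * α)| := hsin
  linarith

lemma geom_range_bound {α : ℝ} (h0 : 0 < |α|) (h2 : |α| ≤ 1/2) (n : ℕ) :
    ‖(∑ m ∈ range n, e α ^ m)‖ ≤ 1 / (2 * |α|) := by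
  rw [geom_sum_eq (e_ne_one h0 h2)]
  rw [norm_div]
  have h1 : ‖(e α ^ n - 1)‖ ≤ 2 := by
    calc ‖(e α ^ n - 1)‖ ≤ ‖(e α ^ n)‖ + ‖(1:ℂ)‖ :=
          norm_sub_le _ _
      _ ≤ 2 := by rw [norm_pow, abs_e]; norm_num
  have h2' : 4 * |α| ≤ ‖(e α - 1)‖ := abs_e_sub_one_ge h0 h2
  have h3 : 0 < ‖(e α - 1)‖ := by linarith
  rw [div_le_div_iff₀ h3 (by positivity)]
  calc ‖(e α ^ n - 1)‖ * (2 * |α|) ≤ 2 * (2 * |α|) := by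
        apply mul_le_mul_of_nonneg_right h1 (by positivity)
    _ = 1 * (4 * |α|) := by ring
    _ ≤ 1 * ‖(e α - 1)‖ := by linarith
    _ = 1 * ‖(e α - 1)‖ := rfl

lemma geom_Ioc_bound {α : ℝ} (h0 : 0 < |α|) (h2 : |α| ≤ 1/2) (a n : ℕ) :
    ‖(∑ m ∈ Ioc a n, e (α * m))‖ ≤ 1 / |α| := by
  rcases le_or_gt n a with h | h
  · rw [Finset.Ioc_eq_empty (by omega)]
    simp only [Finset.sum_empty, norm_zero]
    exact div_nonneg zero_le_one (abs_nonneg α)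
  · have key : ∑ m ∈ Ioc a n, e (α * m) =
        (∑ m ∈ range (n+1), e α ^ m) - ∑ m ∈ range (a+1), e α ^ m := by
      rw [← Finset.Ico_add_one_add_one_eq_Ioc, Finset.sum_Ico_eq_sub _ (by omega)]
      simp only [e_mul_nat]
    rw [key]
    calc ‖((∑ m ∈ range (n+1), e α ^ m) - ∑ m ∈ range (a+1), e α ^ m)‖
        ≤ ‖(∑ m ∈ range (n+1), e α ^ m)‖ +
          ‖(∑ m ∈ range (a+1), e α ^ m)‖ := norm_sub_le _ _
      _ ≤ 1 / (2*|α|) + 1 / (2*|α|) :=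
          add_le_add (geom_range_bound h0 h2 _) (geom_range_bound h0 h2 _)
      _ = 1 / |α| := by
          have hne : |α| ≠ 0 := ne_of_gt h0
          field_simp
          norm_num

lemma abel_bound {z : ℕ → ℂ} {c : ℕ → ℝ} {a : ℕ} {B : ℝ}
    (hc0 : ∀ m, 0 ≤ c m) (hcmono : ∀ m, a < m → c (m+1) ≤ c m)
    (hS : ∀ n, ‖(∑ m ∈ Ioc a n, z m)‖ ≤ B) (N : ℕ) :
    ‖(∑ m ∈ Ioc a N, (c m : ℂ) * z m)‖ ≤ B * c (a+1) := by
  have hB : 0 ≤ B := le_trans (norm_nonneg _) (hS a)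
  rcases le_or_gt N a with h | h
  · rw [Finset.Ioc_eq_empty (by omega)]
    simp only [Finset.sum_empty, norm_zero]
    exact mul_nonneg hB (hc0 _)
  -- key induction: the "discrepancy" identity bound
  have main : ∀ M, a ≤ M →
      ‖((∑ m ∈ Ioc a M, (c m : ℂ) * z m)
        - (c (M+1) : ℂ) * ∑ m ∈ Ioc a M, z m)‖ ≤ B * (c (a+1) - c (M+1)) := by
    intro M
    induction M with
    | zero => intro h0; interval_cases a; simp
    | succ M ih =>
      intro hM
      rcases le_or_gt a M with haM | haM
      · have hID : (∑ m ∈ Ioc a (M+1), (c m : ℂ) * z m)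
            - (c (M+2) : ℂ) * ∑ m ∈ Ioc a (M+1), z m
            = ((∑ m ∈ Ioc a M, (c m : ℂ) * z m)
              - (c (M+1) : ℂ) * ∑ m ∈ Ioc a M, z m)
              + ((c (M+1) : ℂ) - (c (M+2) : ℂ)) * ∑ m ∈ Ioc a (M+1), z m := by
          rw [Finset.sum_Ioc_succ_top haM ((fun m => (c m : ℂ) * z m)),
            Finset.sum_Ioc_succ_top haM z]
          ring
        calc ‖_‖ ≤ ‖((∑ m ∈ Ioc a M, (c m : ℂ) * z m)
              - (c (M+1) : ℂ) * ∑ m ∈ Ioc a M, z m)‖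
              + ‖(((c (M+1) : ℂ) - (c (M+2) : ℂ)) * ∑ m ∈ Ioc a (M+1), z m)‖ := by
              rw [hID]; exact norm_add_le _ _
          _ ≤ B * (c (a+1) - c (M+1)) + (c (M+1) - c (M+2)) * B := by
              apply add_le_add (ih haM)
              rw [norm_mul]
              have h1 : ‖((c (M+1) : ℂ) - (c (M+2) : ℂ))‖ = c (M+1) - c (M+2) := by
                rw [← Complex.ofReal_sub, Complex.norm_real, Real.norm_eq_abs]
                exact abs_of_nonneg (by linarith [hcmono (M+1) (by omega)])
              rw [h1]
              exact mul_le_mul_of_nonneg_left (hS _) (by linarith [hcmono (M+1) (by omega)])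
          _ = B * (c (a+1) - c (M+2)) := by ring
      · -- M + 1 = a case is impossible since a ≤ M+1 and M < a means a = M+1
        have : a = M + 1 := by omega
        subst this
        simp
  have := main N (by omega)
  have h2 : ‖(∑ m ∈ Ioc a N, (c m : ℂ) * z m)‖
      ≤ ‖((∑ m ∈ Ioc a N, (c m : ℂ) * z m)
          - (c (N+1) : ℂ) * ∑ m ∈ Ioc a N, z m)‖
        + ‖((c (N+1) : ℂ) * ∑ m ∈ Ioc a N, z m)‖ := by
    have heq : (∑ m ∈ Ioc a N, (c m : ℂ) * z m) =
        ((∑ m ∈ Ioc a N, (c m : ℂ) * z m) - (c (N+1) : ℂ) * (∑ m ∈ Ioc a N, z m))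
          + (c (N+1) : ℂ) * (∑ m ∈ Ioc a N, z m) := by ring
    calc ‖(∑ m ∈ Ioc a N, (c m : ℂ) * z m)‖
        = ‖(((∑ m ∈ Ioc a N, (c m : ℂ) * z m)
            - (c (N+1) : ℂ) * (∑ m ∈ Ioc a N, z m))
          + (c (N+1) : ℂ) * (∑ m ∈ Ioc a N, z m))‖ := by rw [← heq]
      _ ≤ _ := norm_add_le _ _
  have h3 : ‖((c (N+1) : ℂ) * ∑ m ∈ Ioc a N, z m)‖ ≤ c (N+1) * B := by
    rw [norm_mul, Complex.norm_real, Real.norm_eq_abs, abs_of_nonneg (hc0 _)]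
    exact mul_le_mul_of_nonneg_left (hS _) (hc0 _)
  calc ‖(∑ m ∈ Ioc a N, (c m : ℂ) * z m)‖
      ≤ B * (c (a+1) - c (N+1)) + c (N+1) * B := by linarith
    _ = B * c (a+1) := by ring

open intervalIntegral in
lemma head_sum_bound {σ : ℝ} (hσ0 : 0 < σ) (hσ1 : σ ≤ 1) (X : ℕ) :
    ∑ m ∈ Icc 1 X, ((m : ℝ)) ^ (σ - 1) ≤ (X : ℝ) ^ σ / σ := by
  have hr : (-1:ℝ) < σ - 1 := by linarith
  have hint : ∀ i : ℕ, ((i+1 : ℕ) : ℝ) ^ (σ - 1) ≤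
      ∫ t in ((i:ℝ))..((i+1:ℕ):ℝ), t ^ (σ - 1) := by
    intro i
    rcases Nat.eq_zero_or_pos i with rfl | hi
    · have hv : ∫ t in ((0:ℕ):ℝ)..((0+1:ℕ):ℝ), t ^ (σ-1) = 1/σ := by
        rw [integral_rpow (Or.inl hr)]
        rw [show σ - 1 + 1 = σ by ring]
        push_cast
        rw [Real.zero_rpow (by linarith : σ ≠ 0), Real.one_rpow]
        norm_num
      rw [hv]
      push_cast
      rw [Real.one_rpow, le_div_iff₀ hσ0]
      linarith
    · have hle : ((i:ℝ)) ≤ ((i+1:ℕ):ℝ) := by push_cast; linarith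
      have h1 : ∫ _t in ((i:ℝ))..((i+1:ℕ):ℝ), ((i+1:ℕ):ℝ) ^ (σ-1)
          = ((i+1:ℕ):ℝ) ^ (σ-1) := by
        rw [integral_const]
        push_cast
        rw [show ((i:ℝ) + 1 - i) = 1 by ring, one_smul]
      rw [← h1]
      apply integral_mono_on hle intervalIntegrable_const (intervalIntegrable_rpow' hr)
      intro t ht
      obtain ⟨ht1, ht2⟩ := ht
      have hipos : (1:ℝ) ≤ (i:ℝ) := by exact_mod_cast hi
      have htpos : 0 < t := by linarith
      exact Real.rpow_le_rpow_of_nonpos htpos (by push_cast at ht2 ⊢; linarith) (by linarith)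
  have hsum : ∑ m ∈ Icc 1 X, ((m : ℝ)) ^ (σ - 1)
      = ∑ i ∈ range X, (((i+1 : ℕ)) : ℝ) ^ (σ - 1) := by
    rw [← Finset.Ico_add_one_right_eq_Icc, Finset.sum_Ico_eq_sum_range]
    apply Finset.sum_congr (by congr 1 <;> omega)
    intro i _
    rw [Nat.add_comm 1 i]
  rw [hsum]
  have hadj : ∑ i ∈ range X, (∫ t in ((i:ℝ))..(((i+1:ℕ)):ℝ), t ^ (σ - 1))
      = ∫ t in (((0:ℕ)):ℝ)..((X:ℕ):ℝ), t ^ (σ - 1) := by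
    apply sum_integral_adjacent_intervals (a := fun i : ℕ => (i:ℝ))
    intro k _
    exact intervalIntegrable_rpow' hr
  have hval : ∫ t in (((0:ℕ)):ℝ)..((X:ℕ):ℝ), t ^ (σ - 1) = (X:ℝ) ^ σ / σ := by
    rw [integral_rpow (Or.inl hr)]
    rw [show σ - 1 + 1 = σ by ring]
    push_cast
    rw [Real.zero_rpow (by linarith : σ ≠ 0)]
    ring
  calc ∑ i ∈ range X, (((i+1 : ℕ)) : ℝ) ^ (σ - 1)
      ≤ ∑ i ∈ range X, ∫ t in ((i:ℝ))..(((i+1:ℕ)):ℝ), t ^ (σ - 1) :=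
        Finset.sum_le_sum (fun i _ => hint i)
    _ = (X:ℝ) ^ σ / σ := by rw [hadj, hval]

lemma key_sum_bound {σ α : ℝ} (hσ0 : 0 < σ) (hσ1 : σ ≤ 1)
    (h0 : 0 < |α|) (h2 : |α| ≤ 1/2) (N : ℕ) :
    ‖(∑ m ∈ Icc 1 N, (((m:ℝ) ^ (σ - 1) : ℝ) : ℂ) * e (α * m))‖
      ≤ (1/σ + 1) * |α| ^ (-σ) := by
  set X : ℕ := ⌊|α|⁻¹⌋₊ with hX
  have hainv : (2:ℝ) ≤ |α|⁻¹ := by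
    rw [le_inv_comm₀ (by norm_num) h0]
    linarith
  have hX1 : 1 ≤ X := by
    rw [hX]
    exact Nat.le_floor (by linarith)
  have hXle : (X:ℝ) ≤ |α|⁻¹ := Nat.floor_le (by positivity)
  have hXgt : |α|⁻¹ < (X:ℝ) + 1 := Nat.lt_floor_add_one _
  set k := min X N with hk
  have hsplit : ∑ m ∈ Icc 1 N, (((m:ℝ) ^ (σ - 1) : ℝ) : ℂ) * e (α * m)
      = (∑ m ∈ Ioc 0 k, (((m:ℝ) ^ (σ - 1) : ℝ) : ℂ) * e (α * m))
        + ∑ m ∈ Ioc k N, (((m:ℝ) ^ (σ - 1) : ℝ) : ℂ) * e (α * m) := by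
    rw [show Icc 1 N = Ioc 0 N from rfl]
    rw [Finset.sum_Ioc_consecutive _ (Nat.zero_le k) (min_le_right X N)]
  rw [hsplit]
  have hhead : ‖(∑ m ∈ Ioc 0 k, (((m:ℝ) ^ (σ - 1) : ℝ) : ℂ) * e (α * m))‖
      ≤ (1/σ) * |α| ^ (-σ) := by
    calc ‖(∑ m ∈ Ioc 0 k, (((m:ℝ) ^ (σ - 1) : ℝ) : ℂ) * e (α * m))‖
        ≤ ∑ m ∈ Ioc 0 k, ‖((((m:ℝ) ^ (σ - 1) : ℝ) : ℂ) * e (α * m))‖ :=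
          norm_sum_le _ _
      _ = ∑ m ∈ Ioc 0 k, ((m:ℝ)) ^ (σ - 1) := by
          apply Finset.sum_congr rfl
          intro m hm
          rw [norm_mul, abs_e, mul_one, Complex.norm_real, Real.norm_eq_abs,
            abs_of_nonneg (Real.rpow_nonneg (Nat.cast_nonneg m) _)]
      _ ≤ ∑ m ∈ Icc 1 X, ((m:ℝ)) ^ (σ - 1) := by
          apply Finset.sum_le_sum_of_subset_of_nonneg
          · intro m hm
            simp only [Finset.mem_Ioc, Finset.mem_Icc] at hm ⊢
            omega
          · intro m _ _
            exact Real.rpow_nonneg (Nat.cast_nonneg m) _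
      _ ≤ (X:ℝ) ^ σ / σ := head_sum_bound hσ0 hσ1 X
      _ ≤ (1/σ) * |α| ^ (-σ) := by
          rw [div_eq_mul_one_div, mul_comm, Real.rpow_neg (abs_nonneg α),
            ← Real.inv_rpow (abs_nonneg α)]
          apply mul_le_mul_of_nonneg_left _ (by positivity)
          exact Real.rpow_le_rpow (Nat.cast_nonneg X) hXle (le_of_lt hσ0)
  have htail : ‖(∑ m ∈ Ioc k N, (((m:ℝ) ^ (σ - 1) : ℝ) : ℂ) * e (α * m))‖
      ≤ |α| ^ (-σ) := by
    rcases le_or_gt N X with hNX | hNX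
    · have : k = N := by rw [hk]; omega
      rw [this, Finset.Ioc_eq_empty (by omega)]
      simp only [Finset.sum_empty, norm_zero]
      positivity
    · have hkX : k = X := by rw [hk]; omega
      have habel := abel_bound (z := fun m => e (α * m)) (c := fun m => ((m:ℝ)) ^ (σ - 1))
        (a := k) (B := 1/|α|) ?hc0 ?hcm ?hS N
      case hc0 => intro m; exact Real.rpow_nonneg (Nat.cast_nonneg m) _
      case hcm =>
        intro m hm
        have hm1 : (1:ℝ) ≤ (m:ℝ) := by
          have : 1 ≤ m := by omega
          exact_mod_cast this
        apply Real.rpow_le_rpow_of_nonpos (by linarith) (by push_cast; linarith) (by linarith)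
      case hS => intro n; exact geom_Ioc_bound h0 h2 k n
      refine le_trans habel ?_
      rw [hkX]
      have h1 : ((X+1:ℕ):ℝ) ^ (σ - 1) ≤ (|α|⁻¹) ^ (σ - 1) := by
        apply Real.rpow_le_rpow_of_nonpos (by positivity) (by push_cast; linarith) (by linarith)
      calc (1/|α|) * ((X+1:ℕ):ℝ) ^ (σ - 1) ≤ (1/|α|) * (|α|⁻¹) ^ (σ - 1) := by
            apply mul_le_mul_of_nonneg_left h1 (by positivity)
        _ = |α| ^ (-σ) := by
            rw [one_div, Real.rpow_neg (abs_nonneg α), ← Real.inv_rpow (abs_nonneg α)]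
            rw [show σ = 1 + (σ - 1) by ring, Real.rpow_add (by positivity), Real.rpow_one]
            ring_nf
  calc ‖_‖ ≤ ‖(∑ m ∈ Ioc 0 k, (((m:ℝ) ^ (σ - 1) : ℝ) : ℂ) * e (α * m))‖
        + ‖(∑ m ∈ Ioc k N, (((m:ℝ) ^ (σ - 1) : ℝ) : ℂ) * e (α * m))‖ :=
        norm_add_le _ _
    _ ≤ (1/σ) * |α| ^ (-σ) + |α| ^ (-σ) := add_le_add hhead htail
    _ = (1/σ + 1) * |α| ^ (-σ) := by ring

open intervalIntegral in
lemma side_integral_bound {g : ℝ → ℂ} (hgc : Continuous g) {Ks r t : ℝ}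
    (hKs : 0 ≤ Ks) (hr1 : r + 1 < 0)
    (htpos : 0 < t) (ht2 : t ≤ 1/2)
    (hgb : ∀ α : ℝ, 0 < |α| → |α| ≤ 1/2 → ‖g α‖ ≤ Ks * |α| ^ r) :
    ‖∫ α in t..(1/2:ℝ), g α‖ ≤ Ks * t ^ (r+1) / (-(r+1)) ∧
    ‖∫ α in (-(1/2:ℝ))..(-t), g α‖ ≤ Ks * t ^ (r+1) / (-(r+1)) := by
  have hrne : r ≠ -1 := by intro h; rw [h] at hr1; norm_num at hr1
  have hr0 : r + 1 ≠ 0 := ne_of_lt hr1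
  have h0notin : (0:ℝ) ∉ Set.uIcc t (1/2:ℝ) := by
    rw [Set.uIcc_of_le ht2]
    rintro ⟨h1, _⟩; linarith
  have hval : ∫ α in t..(1/2:ℝ), α ^ r = ((1/2:ℝ) ^ (r+1) - t ^ (r+1))/(r+1) :=
    integral_rpow (Or.inr ⟨hrne, h0notin⟩)
  have hhalf : (0:ℝ) ≤ (1/2:ℝ) ^ (r+1) := Real.rpow_nonneg (by norm_num) _
  have hfinal : Ks * (((1/2:ℝ) ^ (r+1) - t ^ (r+1))/(r+1)) ≤ Ks * t ^ (r+1) / (-(r+1)) := by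
    have heq : ((1/2:ℝ) ^ (r+1) - t ^ (r+1))/(r+1)
        = (t ^ (r+1) - (1/2:ℝ) ^ (r+1))/(-(r+1)) := by
      rw [div_eq_div_iff hr0 (by linarith)]
      ring
    rw [heq, mul_div_assoc]
    apply mul_le_mul_of_nonneg_left _ hKs
    apply div_le_div_of_nonneg_right _ (by linarith)
    linarith
  have hrpowint : IntervalIntegrable (fun α : ℝ => Ks * α ^ r) MeasureTheory.volume t (1/2) :=
    (intervalIntegrable_rpow (Or.inr h0notin)).const_mul Ks
  constructor
  · calc ‖∫ α in t..(1/2:ℝ), g α‖ ≤ ∫ α in t..(1/2:ℝ), ‖g α‖ :=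
        norm_integral_le_integral_norm ht2
      _ ≤ ∫ α in t..(1/2:ℝ), Ks * α ^ r := by
          apply integral_mono_on ht2 (hgc.norm.intervalIntegrable _ _) hrpowint
          intro α hα
          obtain ⟨h1, h2⟩ := hα
          have hαpos : 0 < α := lt_of_lt_of_le htpos h1
          have := hgb α (by rwa [abs_of_pos hαpos]) (by rwa [abs_of_pos hαpos])
          rwa [abs_of_pos hαpos] at this
      _ = Ks * (((1/2:ℝ) ^ (r+1) - t ^ (r+1))/(r+1)) := by
          rw [integral_const_mul, hval]
      _ ≤ Ks * t ^ (r+1) / (-(r+1)) := hfinal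
  · have hneg : (-(1/2:ℝ)) ≤ -t := by linarith
    have hcompint : IntervalIntegrable (fun α : ℝ => Ks * (-α) ^ r)
        MeasureTheory.volume (-(1/2:ℝ)) (-t) := by
      have := (IntervalIntegrable.iff_comp_neg
        (f := fun α : ℝ => Ks * α ^ r) (a := t) (b := (1/2:ℝ))).mp hrpowint
      exact this.symm
    have hcompval : ∫ α in (-(1/2:ℝ))..(-t), Ks * (-α) ^ r
        = ∫ α in t..(1/2:ℝ), Ks * α ^ r := by
      have := integral_comp_neg (a := -(1/2:ℝ)) (b := -t)
        (f := fun α : ℝ => Ks * α ^ r)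
      simpa using this
    calc ‖∫ α in (-(1/2:ℝ))..(-t), g α‖ ≤ ∫ α in (-(1/2:ℝ))..(-t), ‖g α‖ :=
        norm_integral_le_integral_norm hneg
      _ ≤ ∫ α in (-(1/2:ℝ))..(-t), Ks * (-α) ^ r := by
          apply integral_mono_on hneg (hgc.norm.intervalIntegrable _ _) hcompint
          intro α hα
          obtain ⟨h1, h2⟩ := hα
          have hαneg : α < 0 := lt_of_le_of_lt h2 (by linarith)
          have := hgb α (by rw [abs_of_neg hαneg]; linarith) (by rw [abs_of_neg hαneg]; linarith)
          rwa [abs_of_neg hαneg] at this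
      _ = Ks * (((1/2:ℝ) ^ (r+1) - t ^ (r+1))/(r+1)) := by
          rw [hcompval, integral_const_mul, hval]
      _ ≤ Ks * t ^ (r+1) / (-(r+1)) := hfinal

namespace PseudoPoly
variable (f : PseudoPoly)

lemma θ_le_θ : ∀ i j, 1 ≤ i → i ≤ j → j ≤ f.d → f.θ i ≤ f.θ j := by
  intro i j hi hij
  induction j, hij using Nat.le_induction with
  | base => intro _; exact le_rfl
  | succ j hij ih =>
    intro hj
    have h1 : f.θ i ≤ f.θ j := ih (by omega)
    have h2 : f.θ j < f.θ (j+1) := f.θ_mono j (by omega) (by omega)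
    linarith

lemma θ_ge_one : ∀ i, 1 ≤ i → i ≤ f.d → 1 ≤ f.θ i := by
  intro i hi hd
  exact le_trans f.θ_one (f.θ_le_θ 1 i le_rfl hi hd)

lemma θd_pos : 0 < f.θ f.d := lt_of_lt_of_le one_pos (f.θ_ge_one f.d f.d_pos le_rfl)

lemma θ_le_θprev : ∀ i, 1 ≤ i → i ≤ f.d - 1 → f.θ i ≤ f.θprev := by
  intro i hi hd
  rw [θprev]
  have hd2 : f.d ≠ 1 := by omega
  rw [if_neg hd2]
  exact f.θ_le_θ i (f.d - 1) hi hd (by omega)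

lemma eval_zero : f.eval 0 = 0 := by
  rw [eval]
  apply Finset.sum_eq_zero
  intro i hi
  simp only [Finset.mem_Icc] at hi
  rw [Real.zero_rpow (by linarith [f.θ_ge_one i hi.1 hi.2] : f.θ i ≠ 0), mul_zero]

lemma continuous_eval : Continuous f.eval := by
  apply continuous_finset_sum
  intro i hi
  simp only [Finset.mem_Icc] at hi
  apply Continuous.mul continuous_const
  rw [continuous_iff_continuousAt]
  intro x
  apply Real.continuousAt_rpow_const
  right
  linarith [f.θ_ge_one i hi.1 hi.2]

/-- global upper bound -/
lemma eval_le (x : ℝ) : f.eval x ≤ (∑ i ∈ Finset.Icc 1 f.d, |f.a i|) * (max |x| 1) ^ f.θ f.d := by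
  rw [eval, Finset.sum_mul]
  apply Finset.sum_le_sum
  intro i hi
  simp only [Finset.mem_Icc] at hi
  have h1 : 1 ≤ f.θ i := f.θ_ge_one i hi.1 hi.2
  have hm : (1:ℝ) ≤ max |x| 1 := le_max_right _ _
  calc f.a i * x ^ f.θ i ≤ |f.a i * x ^ f.θ i| := le_abs_self _
    _ = |f.a i| * |x ^ f.θ i| := abs_mul _ _
    _ ≤ |f.a i| * |x| ^ f.θ i := by
        apply mul_le_mul_of_nonneg_left (Real.abs_rpow_le_abs_rpow x (f.θ i)) (abs_nonneg _)
    _ ≤ |f.a i| * (max |x| 1) ^ f.θ i := by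
        apply mul_le_mul_of_nonneg_left _ (abs_nonneg _)
        exact Real.rpow_le_rpow (abs_nonneg x) (le_max_left _ _) (by linarith)
    _ ≤ |f.a i| * (max |x| 1) ^ f.θ f.d := by
        apply mul_le_mul_of_nonneg_left _ (abs_nonneg _)
        exact Real.rpow_le_rpow_of_exponent_le hm (f.θ_le_θ i f.d hi.1 hi.2 le_rfl)

/-- lower bound at large M ≥ 1 -/
lemma eval_ge (M : ℝ) (hM : 1 ≤ M) :
    f.eval M ≥ f.a f.d * M ^ f.θ f.d - (∑ i ∈ Finset.Icc 1 f.d, |f.a i|) * M ^ f.θprev := by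
  have hd : f.d = (f.d - 1) + 1 := by have := f.d_pos; omega
  have hsplit : f.eval M = (∑ i ∈ Finset.Icc 1 (f.d - 1), f.a i * M ^ f.θ i)
      + f.a f.d * M ^ f.θ f.d := by
    rw [eval]
    conv_lhs => rw [hd]
    rw [Finset.sum_Icc_succ_top (by omega)]
    rw [← hd]
  rw [hsplit]
  have hlow : (∑ i ∈ Finset.Icc 1 (f.d - 1), f.a i * M ^ f.θ i)
      ≥ -((∑ i ∈ Finset.Icc 1 f.d, |f.a i|) * M ^ f.θprev) := by
    rw [ge_iff_le, neg_le, ← Finset.sum_neg_distrib, Finset.sum_mul]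
    refine le_trans (Finset.sum_le_sum ?term) (Finset.sum_le_sum_of_subset_of_nonneg ?sub ?nn)
    case sub => intro i hi; simp only [Finset.mem_Icc] at hi ⊢; omega
    case nn =>
      intro i _ _
      have hM0 : (0:ℝ) ≤ M ^ f.θprev := Real.rpow_nonneg (by linarith) _
      exact mul_nonneg (abs_nonneg _) hM0
    case term =>
      intro i hi
      simp only [Finset.mem_Icc] at hi
      have h1 : 1 ≤ f.θ i := f.θ_ge_one i hi.1 (by omega)
      calc -(f.a i * M ^ f.θ i) ≤ |f.a i * M ^ f.θ i| := neg_le_abs _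
        _ = |f.a i| * |M ^ f.θ i| := abs_mul _ _
        _ = |f.a i| * M ^ f.θ i := by
            rw [abs_of_nonneg (Real.rpow_nonneg (by linarith) _)]
        _ ≤ |f.a i| * M ^ f.θprev := by
            apply mul_le_mul_of_nonneg_left _ (abs_nonneg _)
            exact Real.rpow_le_rpow_of_exponent_le hM (f.θ_le_θprev i hi.1 hi.2)
  linarith

lemma θprev_ge_one : 1 ≤ f.θprev := by
  have hd := f.d_pos
  by_cases h : f.d = 1
  · rw [θprev, if_pos h]
  · rw [θprev, if_neg h]
    exact f.θ_ge_one (f.d - 1) (by omega) (by omega)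

lemma coeffsum_pos : 0 < ∑ i ∈ Finset.Icc 1 f.d, |f.a i| := by
  have h1 : |f.a f.d| ≤ ∑ i ∈ Finset.Icc 1 f.d, |f.a i| :=
    Finset.single_le_sum (fun i _ => abs_nonneg (f.a i))
      (Finset.mem_Icc.mpr ⟨f.d_pos, le_rfl⟩)
  have := f.a_pos
  calc (0:ℝ) < |f.a f.d| := by rwa [abs_of_pos this]
    _ ≤ _ := h1

lemma exists_root_ge (hδ : f.θprev < f.θ f.d) (y : ℝ) (hy : 0 ≤ y) :
    ∃ x, 0 ≤ x ∧ f.eval x = y := by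
  set A := ∑ i ∈ Finset.Icc 1 f.d, |f.a i| with hA
  have hA0 : 0 < A := f.coeffsum_pos
  set δ := f.θ f.d - f.θprev with hδdef
  have hδ0 : 0 < δ := by simp [hδdef]; linarith
  set q := (y + A) / f.a f.d with hq
  have hq0 : 0 ≤ q := by
    apply div_nonneg (by linarith) (le_of_lt f.a_pos)
  set M := max 1 (q ^ δ⁻¹) with hM
  have hM1 : (1:ℝ) ≤ M := le_max_left _ _
  have hM0 : (0:ℝ) < M := by linarith
  have hMδ : q ≤ M ^ δ := by
    calc q = (q ^ δ⁻¹) ^ δ := (Real.rpow_inv_rpow hq0 (ne_of_gt hδ0)).symm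
      _ ≤ M ^ δ := Real.rpow_le_rpow (Real.rpow_nonneg hq0 _) (le_max_right _ _) (le_of_lt hδ0)
  have hevalM : y ≤ f.eval M := by
    have h1 := f.eval_ge M hM1
    have h2 : M ^ f.θ f.d = M ^ f.θprev * M ^ δ := by
      rw [← Real.rpow_add hM0]
      congr 1
      simp [hδdef]
    have h3 : (1:ℝ) ≤ M ^ f.θprev :=
      Real.one_le_rpow hM1 (by linarith [f.θprev_ge_one])
    have h4 : A + y ≤ f.a f.d * M ^ δ := by
      have := mul_le_mul_of_nonneg_left hMδ (le_of_lt f.a_pos)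
      rw [hq, mul_div_cancel₀ _ (ne_of_gt f.a_pos)] at this
      linarith
    have h5 : f.a f.d * M ^ f.θ f.d - A * M ^ f.θprev
        = M ^ f.θprev * (f.a f.d * M ^ δ - A) := by rw [h2]; ring
    have h6 : y ≤ M ^ f.θprev * (f.a f.d * M ^ δ - A) := by
      calc y = 1 * y := (one_mul y).symm
        _ ≤ M ^ f.θprev * (f.a f.d * M ^ δ - A) := by
            apply mul_le_mul h3 (by linarith) hy (by linarith)
    linarith [h1, h5.symm.le]
  have hIVT := intermediate_value_Icc (le_of_lt hM0) (f.continuous_eval.continuousOn)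
  have hy2 : y ∈ Set.Icc (f.eval 0) (f.eval M) := by
    rw [f.eval_zero]
    exact ⟨hy, hevalM⟩
  obtain ⟨x, hx, hfx⟩ := hIVT hy2
  exact ⟨x, hx.1, hfx⟩

lemma largestRoot_bounds (hδ : f.θprev < f.θ f.d) {N P : ℝ} (hN : 0 ≤ N)
    (h : f.IsLargestRoot N P) :
    0 ≤ P ∧ N ≤ (∑ i ∈ Finset.Icc 1 f.d, |f.a i|) * (max P 1) ^ f.θ f.d := by
  obtain ⟨x, hx0, hfx⟩ := f.exists_root_ge hδ N hN
  have hP0 : 0 ≤ P := le_trans hx0 (h.2 x hfx)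
  refine ⟨hP0, ?_⟩
  have := f.eval_le P
  rw [h.1, abs_of_nonneg hP0] at this
  exact this
end PseudoPoly

section MainAux
lemma continuous_e : Continuous e := by
  apply Complex.continuous_exp.comp
  exact Continuous.mul continuous_const Complex.continuous_ofReal

lemma continuous_V (f : PseudoPoly) (N : ℕ) : Continuous (V f N) := by
  apply Continuous.mul continuous_const
  apply continuous_finset_sum
  intro m _
  apply Continuous.mul continuous_const
  exact continuous_e.comp (continuous_id.mul continuous_const)

/-- norm bound for V -/
lemma V_bound (f : PseudoPoly) (N : ℕ) {α : ℝ} (h0 : 0 < |α|) (h2 : |α| ≤ 1/2) :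
    ‖(V f N α)‖ ≤
      ((1 / f.a f.d) ^ (1 / f.θ f.d) * (1 / f.θ f.d) * (f.θ f.d + 1)) *
        |α| ^ (-(1 / f.θ f.d)) := by
  have hθ : 0 < f.θ f.d :=
    lt_of_lt_of_le one_pos (f.θ_ge_one f.d f.d_pos le_rfl)
  have hσ0 : 0 < 1 / f.θ f.d := by positivity
  have hσ1 : 1 / f.θ f.d ≤ 1 := by
    rw [div_le_one hθ]
    exact f.θ_ge_one f.d f.d_pos le_rfl
  have hcoef : 0 ≤ (1 / f.a f.d) ^ (1 / f.θ f.d) * (1 / f.θ f.d) := by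
    have := f.a_pos
    positivity
  rw [V, norm_mul, Complex.norm_real, Real.norm_eq_abs, abs_of_nonneg hcoef]
  have hkey := key_sum_bound hσ0 hσ1 h0 h2 N
  calc (1 / f.a f.d) ^ (1 / f.θ f.d) * (1 / f.θ f.d) *
        ‖(∑ m ∈ Icc 1 N, (((m:ℝ) ^ (1 / f.θ f.d - 1) : ℝ) : ℂ) * e (α * m))‖
      ≤ (1 / f.a f.d) ^ (1 / f.θ f.d) * (1 / f.θ f.d) *
        ((1/(1 / f.θ f.d) + 1) * |α| ^ (-(1 / f.θ f.d))) :=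
        mul_le_mul_of_nonneg_left hkey hcoef
    _ = ((1 / f.a f.d) ^ (1 / f.θ f.d) * (1 / f.θ f.d) * (f.θ f.d + 1)) *
        |α| ^ (-(1 / f.θ f.d)) := by
        rw [one_div_one_div]
        ring
end MainAux


/-- For `s > θ_d`, `∫_{−τ⁻¹}^{τ⁻¹} V^s e(−αN) = ∫_{−1/2}^{1/2} V^s e(−αN) + O(P^{s−θ_d−δ₂})`
with `δ₂ = v(s/θ_d − 1) > 0` and `τ = P^{θ_d − v}`. -/
theorem truncated_vs_full_singularIntegral (f : PseudoPoly) (v : ℝ) (hv : 0 < v)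
    (hv' : v < min (f.θ f.d - f.θprev) (1 / 5)) (s : ℕ) (hs : f.θ f.d < (s : ℝ)) :
    ∃ C > (0 : ℝ), ∃ N₀ : ℕ, ∀ N : ℕ, N₀ ≤ N → ∀ P : ℝ, f.IsLargestRoot N P →
      ‖((∫ α in (-(P ^ (f.θ f.d - v))⁻¹)..(P ^ (f.θ f.d - v))⁻¹,
              V f N α ^ s * e (-α * N)) -
            ∫ α in (-(1 / 2 : ℝ))..(1 / 2 : ℝ), V f N α ^ s * e (-α * N))‖ ≤
        C * P ^ ((s : ℝ) - f.θ f.d - v * ((s : ℝ) / f.θ f.d - 1)) := by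
  have hθ : 0 < f.θ f.d :=
    lt_of_lt_of_le one_pos (f.θ_ge_one f.d f.d_pos le_rfl)
  have hθ1 : 1 ≤ f.θ f.d := f.θ_ge_one f.d f.d_pos le_rfl
  set θd := f.θ f.d with hθd
  set σ := 1 / θd with hσ
  have hσ0 : 0 < σ := by rw [hσ]; positivity
  have hσ1 : σ ≤ 1 := by rw [hσ, div_le_one hθ]; exact hθ1
  set K : ℝ := (1 / f.a f.d) ^ σ * σ * (θd + 1) with hKdef
  have hK : 0 < K := by
    have := f.a_pos
    rw [hKdef]
    positivity
  have hσs : 1 < σ * s := by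
    rw [hσ, div_mul_eq_mul_div, lt_div_iff₀ hθ, one_mul]
    linarith
  set r : ℝ := -(σ * s) with hrdef
  have hr1 : r + 1 < 0 := by rw [hrdef]; linarith
  set C : ℝ := 2 * K ^ s / (σ * s - 1) with hCdef
  have hC : 0 < C := by
    rw [hCdef]
    have : (0:ℝ) < K ^ s := pow_pos hK s
    have h2 : (0:ℝ) < σ * s - 1 := by linarith
    positivity
  refine ⟨C, hC, ?_⟩
  -- threshold
  set A := ∑ i ∈ Finset.Icc 1 f.d, |f.a i| with hA
  have hA0 : 0 < A := f.coeffsum_pos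
  have hθv : 0 < θd - v := by
    have : v < 1/5 := lt_of_lt_of_le hv' (min_le_right _ _)
    linarith
  set R : ℝ := 2 ^ (θd - v)⁻¹ with hR
  have hR1 : (1:ℝ) ≤ R := Real.one_le_rpow one_le_two (by positivity)
  refine ⟨⌈A * R ^ θd⌉₊ + 1, ?_⟩
  intro N hN P hP
  have hδ : f.θprev < θd := by
    have : v < θd - f.θprev := lt_of_lt_of_le hv' (min_le_left _ _)
    linarith
  have hNR : A * R ^ θd < (N : ℝ) := by
    have h1 : (⌈A * R ^ θd⌉₊ : ℝ) < (N:ℝ) := by exact_mod_cast hN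
    exact lt_of_le_of_lt (Nat.le_ceil _) h1
  obtain ⟨hP0, hPN⟩ := f.largestRoot_bounds hδ (by positivity) hP
  have hmaxR : R < max P 1 := by
    by_contra hcon
    push_neg at hcon
    have : (max P 1) ^ θd ≤ R ^ θd :=
      Real.rpow_le_rpow (le_trans zero_le_one (le_max_right _ _)) hcon (le_of_lt hθ)
    have : A * (max P 1) ^ θd ≤ A * R ^ θd :=
      mul_le_mul_of_nonneg_left this (le_of_lt hA0)
    linarith
  have hP1 : 1 < P := by
    rcases max_cases P 1 with ⟨hm, _⟩ | ⟨hm, hle⟩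
    · rw [hm] at hmaxR
      rcases lt_or_ge 1 P with h | h
      · exact h
      · rw [max_eq_right h] at hm; linarith
    · rw [hm] at hmaxR; linarith
  have hPR : R < P := by
    rwa [max_eq_left (le_of_lt hP1)] at hmaxR
  have hPpos : (0:ℝ) < P := by linarith
  have hτ2 : (2:ℝ) ≤ P ^ (θd - v) := by
    calc (2:ℝ) = R ^ (θd - v) := by
          rw [hR, Real.rpow_inv_rpow (by norm_num) (ne_of_gt hθv)]
      _ ≤ P ^ (θd - v) := Real.rpow_le_rpow (by linarith) (le_of_lt hPR) (le_of_lt hθv)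
  set t : ℝ := (P ^ (θd - v))⁻¹ with ht
  have htpos : 0 < t := by
    rw [ht]
    have : (0:ℝ) < P ^ (θd - v) := by linarith
    positivity
  have ht2 : t ≤ 1/2 := by
    rw [ht]
    rw [inv_le_comm₀ (by linarith) (by norm_num)]
    linarith
  -- continuity and integrability
  set g : ℝ → ℂ := fun α => V f N α ^ s * e (-α * N) with hg
  have hgc : Continuous g := by
    apply Continuous.mul ((continuous_V f N).pow s)
    exact continuous_e.comp ((continuous_neg).mul continuous_const)
  have hint : ∀ a b : ℝ, IntervalIntegrable g MeasureTheory.volume a b :=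
    fun a b => hgc.intervalIntegrable a b
  -- split
  have hsplit : ((∫ α in (-t)..t, g α) - ∫ α in (-(1/2:ℝ))..(1/2:ℝ), g α)
      = -(∫ α in (-(1/2:ℝ))..(-t), g α) - ∫ α in t..(1/2:ℝ), g α := by
    have i1 := intervalIntegral.integral_add_adjacent_intervals
      (hint (-(1/2:ℝ)) (-t)) (hint (-t) t)
    have i2 := intervalIntegral.integral_add_adjacent_intervals
      (hint (-(1/2:ℝ)) t) (hint t (1/2:ℝ))
    rw [← i2, ← i1]
    ring
  -- pointwise bound
  have hgb : ∀ α : ℝ, 0 < |α| → |α| ≤ 1/2 → ‖g α‖ ≤ K ^ s * |α| ^ r := by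
    intro α h0 h2
    rw [hg]
    simp only [norm_mul, norm_pow]
    have he1 : ‖e (-α * N)‖ = 1 := by rw [abs_e]
    rw [he1, mul_one]
    have hVb : ‖V f N α‖ ≤ K * |α| ^ (-σ) := by
      exact V_bound f N h0 h2
    calc ‖V f N α‖ ^ s ≤ (K * |α| ^ (-σ)) ^ s :=
          pow_le_pow_left₀ (norm_nonneg _) hVb s
      _ = K ^ s * (|α| ^ (-σ)) ^ s := mul_pow _ _ _
      _ = K ^ s * |α| ^ r := by
          rw [← Real.rpow_natCast (|α| ^ (-σ)) s, ← Real.rpow_mul (abs_nonneg α), hrdef]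
          ring_nf
  have hKs : (0:ℝ) ≤ K ^ s := le_of_lt (pow_pos hK s)
  obtain ⟨hright, hleft⟩ := side_integral_bound hgc hKs hr1 htpos ht2 hgb
  have hgoal : ‖
      ((∫ α in (-t)..t, g α) - ∫ α in (-(1/2:ℝ))..(1/2:ℝ), g α)‖
      ≤ C * P ^ ((s:ℝ) - θd - v * ((s:ℝ)/θd - 1)) := by
    have habs : ‖
        ((∫ α in (-t)..t, g α) - ∫ α in (-(1/2:ℝ))..(1/2:ℝ), g α)‖
        ≤ ‖∫ α in (-(1/2:ℝ))..(-t), g α‖ + ‖∫ α in t..(1/2:ℝ), g α‖ := by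
      rw [hsplit]
      calc ‖-(∫ α in (-(1/2:ℝ))..(-t), g α) - ∫ α in t..(1/2:ℝ), g α‖
          ≤ ‖-(∫ α in (-(1/2:ℝ))..(-t), g α)‖ + ‖∫ α in t..(1/2:ℝ), g α‖ :=
            norm_sub_le _ _
        _ = _ := by rw [norm_neg]
    have hexp : t ^ (r+1) = P ^ ((s:ℝ) - θd - v * ((s:ℝ)/θd - 1)) := by
      have htP : t = P ^ (-(θd - v)) := by
        rw [ht, Real.rpow_neg (le_of_lt hPpos)]
      have hE : (-(θd - v)) * (r + 1) = (s:ℝ) - θd - v * ((s:ℝ)/θd - 1) := by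
        rw [hrdef, hσ]
        field_simp
        ring
      rw [htP, ← Real.rpow_mul (le_of_lt hPpos), hE]
    calc ‖((∫ α in (-t)..t, g α) - ∫ α in (-(1/2:ℝ))..(1/2:ℝ), g α)‖
        ≤ ‖∫ α in (-(1/2:ℝ))..(-t), g α‖ + ‖∫ α in t..(1/2:ℝ), g α‖ := habs
      _ ≤ K ^ s * t ^ (r+1) / (-(r+1)) + K ^ s * t ^ (r+1) / (-(r+1)) :=
          add_le_add hleft hright
      _ = C * t ^ (r+1) := by
          rw [hCdef, show -(r+1) = σ*(s:ℝ)-1 by rw [hrdef]; ring]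
          ring
      _ = C * P ^ ((s:ℝ) - θd - v * ((s:ℝ)/θd - 1)) := by rw [hexp]
  exact hgoal
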